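/- Let H be a 3-uniform hypergraph in which no 4 vertices span exactly 2 edges and no 4 vertices span exactly 4 edges, and let C₁ and C₂ be distinct tight components of H. Then the vertex sets of C₁ and C₂ intersect in at most one vertex. -/

import Mathlib

open Finset

/-- Number of edges of the 3-graph `H` spanned by the vertex set `X`. -/
def spanCount {V : Type*} [DecidableEq V] (H : Finset (Finset V)) (X : Finset V) : ℕ :=
  ((X.powersetCard 3).filter (· ∈ H)).card

/-- One step of a tight walk within the edge set `H`. -/
def tightStep {V : Type*} [DecidableEq V] (H : Finset (Finset V)) (e f : Finset V) : Prop :=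
  e ∈ H ∧ f ∈ H ∧ (e ∩ f).card = 2

/-- Two edges are tightly connected in `H` if they are joined by a tight walk. -/
def tightConn {V : Type*} [DecidableEq V] (H : Finset (Finset V)) : Finset V → Finset V → Prop :=
  Relation.ReflTransGen (tightStep H)

/-- `C` is a tight component of `H`. -/
def IsTightComponent {V : Type*} [DecidableEq V] (H C : Finset (Finset V)) : Prop :=
  C.Nonempty ∧ C ⊆ H ∧
    (∀ e ∈ C, ∀ f ∈ H, tightConn H e f → f ∈ C) ∧
    (∀ e ∈ C, ∀ f ∈ C, tightConn H e f)

section Helpers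

variable {V : Type*} [DecidableEq V]

lemma card3 {a b c : V} (hab : a ≠ b) (hac : a ≠ c) (hbc : b ≠ c) :
    ({a, b, c} : Finset V).card = 3 := by
  rw [card_insert_of_notMem (by simp [hab, hac]), card_insert_of_notMem (by simp [hbc]),
    card_singleton]

lemma card4 {a b c d : V} (hab : a ≠ b) (hac : a ≠ c) (had : a ≠ d) (hbc : b ≠ c)
    (hbd : b ≠ d) (hcd : c ≠ d) : ({a, b, c, d} : Finset V).card = 4 := by
  rw [card_insert_of_notMem (by simp [hab, hac, had]),
    card_insert_of_notMem (by simp [hbc, hbd]),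
    card_insert_of_notMem (by simp [hcd]), card_singleton]

lemma mem_powersetCard_three {a b c d : V} (hab : a ≠ b) (hac : a ≠ c) (had : a ≠ d)
    (hbc : b ≠ c) (hbd : b ≠ d) (hcd : c ≠ d) {s : Finset V} :
    s ∈ ({a, b, c, d} : Finset V).powersetCard 3 ↔
      s = {a, b, c} ∨ s = {a, b, d} ∨ s = {a, c, d} ∨ s = {b, c, d} := by
  rw [mem_powersetCard]
  constructor
  · rintro ⟨hs, hcard⟩
    have hX : ({a, b, c, d} : Finset V).card = 4 := card4 hab hac had hbc hbd hcd
    have h1 : (({a, b, c, d} : Finset V) \ s).card = 1 := by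
      rw [card_sdiff_of_subset hs, hX, hcard]
    obtain ⟨z, hz⟩ := card_eq_one.mp h1
    have hzs : z ∉ s := by
      have : z ∈ ({a, b, c, d} : Finset V) \ s := hz ▸ mem_singleton_self z
      exact (mem_sdiff.mp this).2
    have hzX : z ∈ ({a, b, c, d} : Finset V) := by
      have : z ∈ ({a, b, c, d} : Finset V) \ s := hz ▸ mem_singleton_self z
      exact (mem_sdiff.mp this).1
    have hse : s = ({a, b, c, d} : Finset V).erase z := by
      apply eq_of_subset_of_card_le
      · intro t ht
        exact mem_erase.mpr ⟨fun h => hzs (h ▸ ht), hs ht⟩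
      · rw [card_erase_of_mem hzX, hX, hcard]
    simp only [mem_insert, mem_singleton] at hzX
    rcases hzX with rfl | rfl | rfl | rfl
    · right; right; right
      rw [hse, erase_insert (by simp [hab, hac, had])]
    · right; right; left
      rw [hse, erase_insert_of_ne hab,
        erase_insert (by simp [hbc, hbd])]
    · right; left
      rw [hse, erase_insert_of_ne hac, erase_insert_of_ne hbc,
        erase_insert (by simp [hcd])]
    · left
      rw [hse, erase_insert_of_ne had, erase_insert_of_ne hbd,
        erase_insert_of_ne hcd, erase_singleton, insert_empty_eq]
  · rintro (rfl | rfl | rfl | rfl)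
    · exact ⟨by intro t ht; simp at ht ⊢; tauto, card3 hab hac hbc⟩
    · exact ⟨by intro t ht; simp at ht ⊢; tauto, card3 hab had hbd⟩
    · exact ⟨by intro t ht; simp at ht ⊢; tauto, card3 hac had hcd⟩
    · exact ⟨by intro t ht; simp at ht ⊢; tauto, card3 hbc hbd hcd⟩

lemma finset_ne_of_mem_not_mem {s t : Finset V} {w : V} (h1 : w ∈ s) (h2 : w ∉ t) :
    s ≠ t := fun h => h2 (h ▸ h1)

lemma spanCount_quad (H : Finset (Finset V)) {a b c d : V} (hab : a ≠ b) (hac : a ≠ c)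
    (had : a ≠ d) (hbc : b ≠ c) (hbd : b ≠ d) (hcd : c ≠ d) :
    spanCount H {a, b, c, d} =
      (if ({a, b, c} : Finset V) ∈ H then 1 else 0) +
      (if ({a, b, d} : Finset V) ∈ H then 1 else 0) +
      (if ({a, c, d} : Finset V) ∈ H then 1 else 0) +
      (if ({b, c, d} : Finset V) ∈ H then 1 else 0) := by
  have hps : (({a, b, c, d} : Finset V).powersetCard 3) =
      ({{a, b, c}, {a, b, d}, {a, c, d}, {b, c, d}} : Finset (Finset V)) := by
    ext s
    rw [mem_powersetCard_three hab hac had hbc hbd hcd]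
    simp
  have n12 : ({a, b, c} : Finset V) ≠ {a, b, d} :=
    finset_ne_of_mem_not_mem (by simp) (by simp [hac.symm, hbc.symm, hcd] : c ∉ _)
  have n13 : ({a, b, c} : Finset V) ≠ {a, c, d} :=
    finset_ne_of_mem_not_mem (by simp) (by simp [hab.symm, hbc, hbd] : b ∉ _)
  have n14 : ({a, b, c} : Finset V) ≠ {b, c, d} :=
    finset_ne_of_mem_not_mem (by simp) (by simp [hab, hac, had] : a ∉ _)
  have n23 : ({a, b, d} : Finset V) ≠ {a, c, d} :=
    finset_ne_of_mem_not_mem (by simp) (by simp [hab.symm, hbc, hbd] : b ∉ _)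
  have n24 : ({a, b, d} : Finset V) ≠ {b, c, d} :=
    finset_ne_of_mem_not_mem (by simp) (by simp [hab, hac, had] : a ∉ _)
  have n34 : ({a, c, d} : Finset V) ≠ {b, c, d} :=
    finset_ne_of_mem_not_mem (by simp) (by simp [hab, hac, had] : a ∉ _)
  unfold spanCount
  rw [hps, card_filter]
  rw [sum_insert (by simp [n12, n13, n14]), sum_insert (by simp [n23, n24]),
    sum_insert (by simp [n34]), sum_singleton]
  ring

end Helpers

section Quad

variable {V : Type*} [DecidableEq V] {H : Finset (Finset V)}

lemma tswap12 (a b c : V) : ({a, b, c} : Finset V) = {b, a, c} := by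
  exact Finset.insert_comm a b {c}

lemma tswap23 (a b c : V) : ({a, b, c} : Finset V) = {a, c, b} := by
  rw [Finset.pair_comm]

lemma trot (a b c : V) : ({a, b, c} : Finset V) = {b, c, a} := by
  rw [tswap12, tswap23]

variable (hfree : ∀ X : Finset V, X.card = 4 → spanCount H X ≠ 2 ∧ spanCount H X ≠ 4)

include hfree

lemma quadL1 {a b c d : V} (hab : a ≠ b) (hac : a ≠ c) (had : a ≠ d) (hbc : b ≠ c)
    (hbd : b ≠ d) (hcd : c ≠ d) (h1 : ({a, b, c} : Finset V) ∈ H)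
    (h2 : ({a, b, d} : Finset V) ∈ H) (h3 : ({a, c, d} : Finset V) ∈ H) :
    ({b, c, d} : Finset V) ∉ H := by
  have hq := hfree {a, b, c, d} (card4 hab hac had hbc hbd hcd)
  rw [spanCount_quad H hab hac had hbc hbd hcd] at hq
  intro h4
  simp only [if_pos h1, if_pos h2, if_pos h3, if_pos h4] at hq
  omega

lemma quadL2 {a b c d : V} (hab : a ≠ b) (hac : a ≠ c) (had : a ≠ d) (hbc : b ≠ c)
    (hbd : b ≠ d) (hcd : c ≠ d) (h1 : ({a, b, c} : Finset V) ∈ H)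
    (h2 : ({a, b, d} : Finset V) ∈ H) :
    (({a, c, d} : Finset V) ∈ H ↔ ({b, c, d} : Finset V) ∉ H) := by
  have hq := hfree {a, b, c, d} (card4 hab hac had hbc hbd hcd)
  rw [spanCount_quad H hab hac had hbc hbd hcd] at hq
  simp only [if_pos h1, if_pos h2] at hq
  by_cases hx : ({a, c, d} : Finset V) ∈ H <;> by_cases hy : ({b, c, d} : Finset V) ∈ H <;>
    simp only [if_pos, if_neg, hx, hy] at hq ⊢ <;> simp_all <;> omega

lemma quadL3 {a b c d : V} (hab : a ≠ b) (hac : a ≠ c) (had : a ≠ d) (hbc : b ≠ c)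
    (hbd : b ≠ d) (hcd : c ≠ d) (h1 : ({a, b, c} : Finset V) ∈ H)
    (h2 : ({a, b, d} : Finset V) ∉ H) :
    (({a, c, d} : Finset V) ∈ H ↔ ({b, c, d} : Finset V) ∈ H) := by
  have hq := hfree {a, b, c, d} (card4 hab hac had hbc hbd hcd)
  rw [spanCount_quad H hab hac had hbc hbd hcd] at hq
  simp only [if_pos h1, if_neg h2] at hq
  by_cases hx : ({a, c, d} : Finset V) ∈ H <;> by_cases hy : ({b, c, d} : Finset V) ∈ H <;>
    simp only [if_pos, if_neg, hx, hy] at hq ⊢ <;> simp_all <;> omega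

lemma quadL4 {a b c d : V} (hab : a ≠ b) (hac : a ≠ c) (had : a ≠ d) (hbc : b ≠ c)
    (hbd : b ≠ d) (hcd : c ≠ d) (h1 : ({a, b, c} : Finset V) ∈ H)
    (h2 : ({a, b, d} : Finset V) ∈ H) (h3 : ({a, c, d} : Finset V) ∉ H)
    (h4 : ({b, c, d} : Finset V) ∉ H) : False := by
  have hq := hfree {a, b, c, d} (card4 hab hac had hbc hbd hcd)
  rw [spanCount_quad H hab hac had hbc hbd hcd] at hq
  simp only [if_pos h1, if_pos h2, if_neg h3, if_neg h4] at hq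
  omega

end Quad

section Basics

variable {V : Type*} [DecidableEq V] {H : Finset (Finset V)}

lemma exists_third {e : Finset V} (he : e.card = 3) {p q : V} (hp : p ∈ e) (hq : q ∈ e)
    (hpq : p ≠ q) : ∃ r, r ≠ p ∧ r ≠ q ∧ e = {p, q, r} := by
  have hsub : ({p, q} : Finset V) ⊆ e := by
    intro z hz; simp only [mem_insert, mem_singleton] at hz
    rcases hz with rfl | rfl <;> assumption
  have hcd : (e \ {p, q}).card = 1 := by
    rw [card_sdiff_of_subset hsub, card_pair hpq, he]
  obtain ⟨r, hr⟩ := card_eq_one.mp hcd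
  have hrmem : r ∈ e \ ({p, q} : Finset V) := hr ▸ mem_singleton_self r
  rw [mem_sdiff, mem_insert, mem_singleton] at hrmem
  obtain ⟨hre, hrpq⟩ := hrmem
  push_neg at hrpq
  refine ⟨r, hrpq.1, hrpq.2, ?_⟩
  apply (eq_of_subset_of_card_le ?_ ?_).symm
  · intro z hz
    simp only [mem_insert, mem_singleton] at hz
    rcases hz with rfl | rfl | rfl <;> assumption
  · rw [he, card3 hpq hrpq.1.symm hrpq.2.symm]

lemma comp_closed {C : Finset (Finset V)} (hC : IsTightComponent H C) {e f : Finset V}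
    (he : e ∈ C) (hf : f ∈ H) (hconn : tightConn H e f) : f ∈ C :=
  hC.2.2.1 e he f hf hconn

lemma comp_closed_step {C : Finset (Finset V)} (hC : IsTightComponent H C) {e f : Finset V}
    (he : e ∈ C) (hstep : tightStep H e f) : f ∈ C :=
  comp_closed hC he hstep.2.1 (Relation.ReflTransGen.single hstep)

lemma comp_eq {C₁ C₂ : Finset (Finset V)} (h₁ : IsTightComponent H C₁)
    (h₂ : IsTightComponent H C₂) {f : Finset V} (hf₁ : f ∈ C₁) (hf₂ : f ∈ C₂) : C₁ = C₂ := by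
  apply Finset.Subset.antisymm
  · intro g hg
    exact comp_closed h₂ hf₂ (h₁.2.1 hg) (h₁.2.2.2 f hf₁ g hg)
  · intro g hg
    exact comp_closed h₁ hf₁ (h₂.2.1 hg) (h₂.2.2.2 f hf₂ g hg)

lemma comp_eq_of_two_shared (h3 : ∀ e ∈ H, e.card = 3) {C₁ C₂ : Finset (Finset V)}
    (h₁ : IsTightComponent H C₁) (h₂ : IsTightComponent H C₂) {e f : Finset V}
    (he : e ∈ C₁) (hf : f ∈ C₂) (hcard : 2 ≤ (e ∩ f).card) : C₁ = C₂ := by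
  have heH : e ∈ H := h₁.2.1 he
  have hfH : f ∈ H := h₂.2.1 hf
  rcases eq_or_lt_of_le hcard with h2 | h3'
  · exact comp_eq h₁ h₂ he (comp_closed_step h₂ hf
      ⟨hfH, heH, by rw [inter_comm]; omega⟩)
  · have : (e ∩ f).card = 3 := by
      have h1 : (e ∩ f).card ≤ e.card := card_le_card inter_subset_left
      rw [h3 e heH] at h1; omega
    have hef : e = f := by
      have h1 : e ∩ f = e := eq_of_subset_of_card_le inter_subset_left (by rw [h3 e heH, this])
      have h2 : e ∩ f = f := eq_of_subset_of_card_le inter_subset_right (by rw [h3 f hfH, this])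
      rw [← h1, h2]
    exact comp_eq h₁ h₂ he (hef ▸ hf)

end Basics

section LemA

variable {V : Type*} [DecidableEq V] {H : Finset (Finset V)}
variable (hfree : ∀ X : Finset V, X.card = 4 → spanCount H X ≠ 2 ∧ spanCount H X ≠ 4)

include hfree

lemma lemA_core {v α β γ w : V}
    (hvα : v ≠ α) (hvβ : v ≠ β) (hvγ : v ≠ γ) (hvw : v ≠ w)
    (hαβ : α ≠ β) (hαγ : α ≠ γ) (hαw : α ≠ w)
    (hβγ : β ≠ γ) (hβw : β ≠ w) (hγw : γ ≠ w)
    (eαβ : ({v, α, β} : Finset V) ∈ H) (eαγ : ({v, α, γ} : Finset V) ∈ H)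
    (eβγ : ({v, β, γ} : Finset V) ∈ H)
    (hg : ({α, β, w} : Finset V) ∈ H) (hA1 : ({α, β, γ} : Finset V) ∉ H)
    (h1 : ({v, α, w} : Finset V) ∈ H) (h2 : ({v, β, w} : Finset V) ∉ H) : False := by
  have hiff := quadL3 hfree hvβ hvγ hvw hβγ hβw hγw eβγ h2
  by_cases hc : ({v, γ, w} : Finset V) ∈ H
  · have hbgw : ({β, γ, w} : Finset V) ∈ H := hiff.mp hc
    have hA4 : ({α, γ, w} : Finset V) ∉ H := quadL1 hfree hvα hvγ hvw hαγ hαw hγw eαγ h1 hc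
    exact quadL4 hfree hβw hαβ.symm hβγ hαw.symm hγw.symm hαγ
      ((trot α β w) ▸ hg) ((tswap23 β γ w) ▸ hbgw)
      ((tswap12 α β γ) ▸ hA1) ((trot w α γ).symm ▸ hA4)
  · have hbgw : ({β, γ, w} : Finset V) ∉ H := fun h => hc (hiff.mpr h)
    have hiff2 := quadL3 hfree hαβ hαw hαγ hβw hβγ hγw.symm hg hA1
    have hA4 : ({α, γ, w} : Finset V) ∉ H := fun h =>
      hbgw ((tswap23 β w γ) ▸ (hiff2.mp ((tswap23 α γ w) ▸ h)))
    exact quadL4 hfree hvα hvγ hvw hαγ hαw hγw eαγ h1 hc hA4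

lemma lemA {v : V} {S : Finset V} (hv : v ∉ S) (hS : 3 ≤ S.card)
    (hblob : ∀ a ∈ S, ∀ b ∈ S, a ≠ b → ({v, a, b} : Finset V) ∈ H)
    {α β w : V} (hα : α ∈ S) (hβ : β ∈ S) (hαβ : α ≠ β) (hwv : w ≠ v) (hwS : w ∉ S) :
    ({α, β, w} : Finset V) ∉ H := by
  intro hg
  have hsub : ({α, β} : Finset V) ⊆ S := by
    intro z hz; simp only [mem_insert, mem_singleton] at hz
    rcases hz with rfl | rfl <;> assumption
  have hne : (S \ ({α, β} : Finset V)).Nonempty := by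
    rw [← card_pos, card_sdiff_of_subset hsub, card_pair hαβ]; omega
  obtain ⟨γ, hγ⟩ := hne
  rw [mem_sdiff, mem_insert, mem_singleton] at hγ
  obtain ⟨hγS, hγn⟩ := hγ
  push_neg at hγn
  obtain ⟨hγα, hγβ⟩ := hγn
  have hvα : v ≠ α := fun h => hv (h ▸ hα)
  have hvβ : v ≠ β := fun h => hv (h ▸ hβ)
  have hvγ : v ≠ γ := fun h => hv (h ▸ hγS)
  have hαw : α ≠ w := fun h => hwS (h ▸ hα)
  have hβw : β ≠ w := fun h => hwS (h ▸ hβ)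
  have hγw : γ ≠ w := fun h => hwS (h ▸ hγS)
  have eαβ : ({v, α, β} : Finset V) ∈ H := hblob α hα β hβ hαβ
  have eαγ : ({v, α, γ} : Finset V) ∈ H := hblob α hα γ hγS hγα.symm
  have eβγ : ({v, β, γ} : Finset V) ∈ H := hblob β hβ γ hγS hγβ.symm
  have hA1 : ({α, β, γ} : Finset V) ∉ H :=
    quadL1 hfree hvα hvβ hvγ hαβ hγα.symm hγβ.symm eαβ eαγ eβγ
  have hone := quadL2 hfree hαβ hvα.symm hαw hvβ.symm hβw hwv.symm
    ((trot v α β) ▸ eαβ) hg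
  by_cases hx : ({α, v, w} : Finset V) ∈ H
  · exact lemA_core hfree hvα hvβ hvγ hwv.symm hαβ hγα.symm hαw hγβ.symm hβw hγw
      eαβ eαγ eβγ hg hA1 ((tswap12 α v w) ▸ hx) ((tswap12 β v w) ▸ (hone.mp hx))
  · have hy : ({β, v, w} : Finset V) ∈ H := by
      by_contra hy; exact hx (hone.mpr hy)
    exact lemA_core hfree hvβ hvα hvγ hwv.symm hαβ.symm hγβ.symm hβw hγα.symm hαw hγw
      ((tswap23 v α β) ▸ eαβ) eβγ eαγ ((tswap12 α β w) ▸ hg) ((tswap12 α β γ) ▸ hA1)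
      ((tswap12 β v w) ▸ hy) (fun h => hx ((tswap12 v α w) ▸ h))

end LemA

section Structure

variable {V : Type*} [DecidableEq V] {H : Finset (Finset V)}

lemma triple_inter_shared {e f : Finset V} {a b : V} (ha : a ∈ e) (ha' : a ∈ f)
    (hb : b ∈ e) (hb' : b ∈ f) (hab : a ≠ b) (he : e.card = 3) (hf : f.card = 3)
    (hnef : e ≠ f) : (e ∩ f).card = 2 := by
  have hsub : ({a, b} : Finset V) ⊆ e ∩ f := by
    intro z hz; simp only [mem_insert, mem_singleton] at hz
    rcases hz with rfl | rfl <;> exact mem_inter.mpr ⟨by assumption, by assumption⟩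
  have h2 : 2 ≤ (e ∩ f).card := by
    have := card_le_card hsub; rwa [card_pair hab] at this
  have h3' : (e ∩ f).card ≤ 3 := le_trans (card_le_card inter_subset_left) (le_of_eq he)
  rcases eq_or_lt_of_le h2 with h | h
  · omega
  · exfalso
    have hc3 : (e ∩ f).card = 3 := by omega
    have h1 : e ∩ f = e := eq_of_subset_of_card_le inter_subset_left (by omega)
    have h2' : e ∩ f = f := eq_of_subset_of_card_le inter_subset_right (by rw [hf, hc3])
    exact hnef (h1.symm.trans h2')

lemma tstep_of_shared (h3 : ∀ e ∈ H, e.card = 3) {e f : Finset V} (he : e ∈ H) (hf : f ∈ H)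
    {a b : V} (ha : a ∈ e) (ha' : a ∈ f) (hb : b ∈ e) (hb' : b ∈ f) (hab : a ≠ b)
    (hnef : e ≠ f) : tightStep H e f :=
  ⟨he, hf, triple_inter_shared ha ha' hb hb' hab (h3 e he) (h3 f hf) hnef⟩

variable (hfree : ∀ X : Finset V, X.card = 4 → spanCount H X ≠ 2 ∧ spanCount H X ≠ 4)
variable (h3 : ∀ e ∈ H, e.card = 3)

lemma blob3 {C : Finset (Finset V)} {v x y z : V} (h1 : ({v, x, y} : Finset V) ∈ C)
    (h2 : ({v, x, z} : Finset V) ∈ C) (h3' : ({v, y, z} : Finset V) ∈ C) :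
    ∀ a ∈ ({x, y, z} : Finset V), ∀ b ∈ ({x, y, z} : Finset V), a ≠ b →
      ({v, a, b} : Finset V) ∈ C := by
  intro a ha b hb hab
  simp only [mem_insert, mem_singleton] at ha hb
  have sw : ∀ a b : V, ({v, a, b} : Finset V) ∈ C → ({v, b, a} : Finset V) ∈ C :=
    fun a b h => (tswap23 v a b) ▸ h
  rcases ha with rfl | rfl | rfl <;> rcases hb with rfl | rfl | rfl <;>
    first
      | exact absurd rfl hab
      | assumption
      | exact sw _ _ (by assumption)

include hfree h3 in
lemma exists_blob {C : Finset (Finset V)} (hC : IsTightComponent H C)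
    {e₀ f₀ : Finset V} (he₀ : e₀ ∈ C) (hf₀ : f₀ ∈ C) (hnef : e₀ ≠ f₀) :
    ∃ v : V, ∃ S : Finset V, v ∉ S ∧ 3 ≤ S.card ∧
      ∀ a ∈ S, ∀ b ∈ S, a ≠ b → ({v, a, b} : Finset V) ∈ C := by
  have hconn := hC.2.2.2 e₀ he₀ f₀ hf₀
  rcases Relation.ReflTransGen.cases_head hconn with heq | ⟨g, hstep, -⟩
  · exact absurd heq hnef
  have heH : e₀ ∈ H := hstep.1
  have hgH : g ∈ H := hstep.2.1
  have hgC : g ∈ C := comp_closed_step hC he₀ hstep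
  have hint : (e₀ ∩ g).card = 2 := hstep.2.2
  obtain ⟨p, q, hpq, hpair⟩ := card_eq_two.mp hint
  have hpe : p ∈ e₀ := (mem_inter.mp (hpair ▸ mem_insert_self p {q})).1
  have hpg : p ∈ g := (mem_inter.mp (hpair ▸ mem_insert_self p {q})).2
  have hqe : q ∈ e₀ := (mem_inter.mp (hpair ▸ mem_insert_of_mem (mem_singleton_self q))).1
  have hqg : q ∈ g := (mem_inter.mp (hpair ▸ mem_insert_of_mem (mem_singleton_self q))).2
  obtain ⟨r, hrp, hrq, heq⟩ := exists_third (h3 e₀ heH) hpe hqe hpq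
  obtain ⟨s, hsp, hsq, hgeq⟩ := exists_third (h3 g hgH) hpg hqg hpq
  have hre : r ∈ e₀ := by rw [heq]; simp
  have hsg : s ∈ g := by rw [hgeq]; simp
  have hrg : r ∉ g := by
    intro h
    have : r ∈ e₀ ∩ g := mem_inter.mpr ⟨hre, h⟩
    rw [hpair] at this; simp only [mem_insert, mem_singleton] at this
    tauto
  have hse : s ∉ e₀ := by
    intro h
    have : s ∈ e₀ ∩ g := mem_inter.mpr ⟨h, hsg⟩
    rw [hpair] at this; simp only [mem_insert, mem_singleton] at this
    tauto
  have hrs : r ≠ s := fun h => hrg (h ▸ hsg)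
  have heH' : ({p, q, r} : Finset V) ∈ H := heq ▸ heH
  have hgH' : ({p, q, s} : Finset V) ∈ H := hgeq ▸ hgH
  have hone := quadL2 hfree hpq hrp.symm hsp.symm hrq.symm hsq.symm hrs heH' hgH'
  by_cases hx : ({p, r, s} : Finset V) ∈ H
  · refine ⟨p, {q, r, s}, by simp [hpq, hrp.symm, hsp.symm], by
      rw [card3 hrq.symm hsq.symm hrs], blob3 ?_ ?_ ?_⟩
    · exact heq ▸ he₀
    · exact hgeq ▸ hgC
    · refine comp_closed_step hC (heq ▸ he₀)
        (tstep_of_shared h3 heH' hx (a := p) (b := r) ?_ ?_ ?_ ?_ hrp.symm ?_)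
      · simp
      · simp
      · simp
      · simp
      · exact finset_ne_of_mem_not_mem (by simp : q ∈ _)
          (by simp [hpq.symm, hrq.symm, hsq.symm] : q ∉ _)
  · have hy : ({q, r, s} : Finset V) ∈ H := by
      by_contra hy; exact hx (hone.mpr hy)
    refine ⟨q, {p, r, s}, by simp [hpq.symm, hrq.symm, hsq.symm], by
      rw [card3 hrp.symm hsp.symm hrs], blob3 ?_ ?_ ?_⟩
    · exact (tswap12 p q r) ▸ (heq ▸ he₀)
    · exact (tswap12 p q s) ▸ (hgeq ▸ hgC)
    · refine comp_closed_step hC (heq ▸ he₀)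
        (tstep_of_shared h3 heH' hy (a := q) (b := r) ?_ ?_ ?_ ?_ hrq.symm ?_)
      · simp
      · simp
      · simp
      · simp
      · exact finset_ne_of_mem_not_mem (by simp : p ∈ _)
          (by simp [hpq, hrp.symm, hsp.symm] : p ∉ _)

include hfree h3 in
lemma structure_thm {C : Finset (Finset V)} (hC : IsTightComponent H C)
    {e₀ f₀ : Finset V} (he₀ : e₀ ∈ C) (hf₀ : f₀ ∈ C) (hnef : e₀ ≠ f₀) :
    ∃ v : V, ∃ S : Finset V, v ∉ S ∧ 3 ≤ S.card ∧
      (∀ a ∈ S, ∀ b ∈ S, a ≠ b → ({v, a, b} : Finset V) ∈ C) ∧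
      (∀ f ∈ C, ∃ a ∈ S, ∃ b ∈ S, a ≠ b ∧ f = {v, a, b}) := by
  classical
  obtain ⟨v, S₀, hv₀, hc₀, hblob₀⟩ := exists_blob hfree h3 hC he₀ hf₀ hnef
  set 𝒮 := (C.biUnion id).powerset.filter
    (fun S => v ∉ S ∧ 3 ≤ S.card ∧ ∀ a ∈ S, ∀ b ∈ S, a ≠ b → ({v, a, b} : Finset V) ∈ C)
    with h𝒮
  have hmem𝒮 : ∀ S : Finset V, S ∈ 𝒮 ↔ (S ⊆ C.biUnion id ∧ (v ∉ S ∧ 3 ≤ S.card ∧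
      ∀ a ∈ S, ∀ b ∈ S, a ≠ b → ({v, a, b} : Finset V) ∈ C)) := by
    intro S; rw [h𝒮, mem_filter, mem_powerset]
  have hsub₀ : S₀ ⊆ C.biUnion id := by
    intro a ha
    obtain ⟨b, hb, hba⟩ := exists_mem_ne (s := S₀) (by omega) a
    exact mem_biUnion.mpr ⟨{v, b, a}, hblob₀ b hb a ha hba, by simp⟩
  have hne𝒮 : 𝒮.Nonempty := ⟨S₀, (hmem𝒮 S₀).mpr ⟨hsub₀, hv₀, hc₀, hblob₀⟩⟩
  obtain ⟨S, hS𝒮, hSmax⟩ := exists_max_image 𝒮 card hne𝒮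
  rw [hmem𝒮] at hS𝒮
  obtain ⟨hSsub, hvS, hScard, hblob⟩ := hS𝒮
  have hblobH : ∀ a ∈ S, ∀ b ∈ S, a ≠ b → ({v, a, b} : Finset V) ∈ H :=
    fun a ha b hb hab => hC.2.1 (hblob a ha b hb hab)
  have hgrow : ∀ s ∈ S, ∀ w, w ∉ S → w ≠ v → ({v, s, w} : Finset V) ∈ C → False := by
    intro s hs w hw hwv hc
    have hsv : v ≠ s := fun h => hvS (h ▸ hs)
    have hsw : s ≠ w := fun h => hw (h ▸ hs)
    have hnew : ∀ t ∈ S, ({v, t, w} : Finset V) ∈ C := by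
      intro t ht
      by_cases hts : t = s
      · subst hts; exact hc
      · have hst : s ≠ t := fun h => hts h.symm
        have hvt : v ≠ t := fun h => hvS (h ▸ ht)
        have htw : t ≠ w := fun h => hw (h ▸ ht)
        have hiff := quadL2 hfree hsv hvt hwv.symm hst hsw htw
          (hblobH s hs t ht hst) (hC.2.1 hc)
        have hstw : ({s, t, w} : Finset V) ∉ H :=
          lemA hfree hvS hScard hblobH hs ht hst hwv hw
        have hvtw : ({v, t, w} : Finset V) ∈ H := hiff.mpr hstw
        refine comp_closed_step hC hc
          (tstep_of_shared h3 (hC.2.1 hc) hvtw (a := v) (b := w) ?_ ?_ ?_ ?_ hwv.symm ?_)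
        · simp
        · simp
        · simp
        · simp
        · exact finset_ne_of_mem_not_mem (by simp : s ∈ _)
            (by simp [hsv.symm, hst, hsw] : s ∉ _)
    have hSnew : insert w S ∈ 𝒮 := by
      rw [hmem𝒮]
      refine ⟨?_, ?_, ?_, ?_⟩
      · intro a ha; rcases mem_insert.mp ha with rfl | haS
        · exact mem_biUnion.mpr ⟨{v, s, a}, hc, by simp⟩
        · exact hSsub haS
      · simp only [mem_insert]; push_neg; exact ⟨hwv.symm, hvS⟩
      · exact le_trans hScard (card_le_card (subset_insert w S))
      · intro a ha b hb hab
        rcases mem_insert.mp ha with rfl | haS <;> rcases mem_insert.mp hb with rfl | hbS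
        · exact absurd rfl hab
        · exact (tswap23 v b _) ▸ hnew b hbS
        · exact hnew a haS
        · exact hblob a haS b hbS hab
    have hle := hSmax _ hSnew
    rw [card_insert_of_notMem hw] at hle
    omega
  obtain ⟨a₀, ha₀, b₀, hb₀, hab₀⟩ := one_lt_card.mp (by omega : 1 < S.card)
  have hEdge : ({v, a₀, b₀} : Finset V) ∈ C := hblob a₀ ha₀ b₀ hb₀ hab₀
  refine ⟨v, S, hvS, hScard, hblob, ?_⟩
  intro f hf
  have hconn := hC.2.2.2 _ hEdge f hf
  clear hf
  induction hconn with
  | refl => exact ⟨a₀, ha₀, b₀, hb₀, hab₀, rfl⟩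
  | @tail b c hconn' hstep ih =>
    obtain ⟨α, hαS, β, hβS, hαβ, hbeq⟩ := ih
    have hbC : b ∈ C := comp_closed hC hEdge hstep.1 hconn'
    have hcC : c ∈ C := comp_closed_step hC hbC hstep
    have hcH : c ∈ H := hstep.2.1
    have hvα : v ≠ α := fun h => hvS (h ▸ hαS)
    have hvβ : v ≠ β := fun h => hvS (h ▸ hβS)
    have hbcard : b.card = 3 := h3 b hstep.1
    have hz1 : (b \ c).card = 1 := by
      have hh := card_sdiff_add_card_inter b c
      rw [hstep.2.2, hbcard] at hh
      omega
    obtain ⟨z, hz⟩ := card_eq_one.mp hz1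
    have hzb : z ∈ b := (mem_sdiff.mp (hz ▸ mem_singleton_self z)).1
    have hzc : z ∉ c := (mem_sdiff.mp (hz ▸ mem_singleton_self z)).2
    have hmemc : ∀ u ∈ b, u ≠ z → u ∈ c := by
      intro u hu huz
      by_contra huc
      have hu' : u ∈ b \ c := mem_sdiff.mpr ⟨hu, huc⟩
      rw [hz] at hu'; exact huz (mem_singleton.mp hu')
    rw [hbeq] at hzb
    simp only [mem_insert, mem_singleton] at hzb
    rcases hzb with h | h | h
    · -- z = v : impossible
      exfalso
      have hvnc : v ∉ c := h ▸ hzc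
      have hαc : α ∈ c := hmemc α (by rw [hbeq]; simp) (fun e => hvα (e.trans h).symm)
      have hβc : β ∈ c := hmemc β (by rw [hbeq]; simp) (fun e => hvβ (e.trans h).symm)
      obtain ⟨w, hwα, hwβ, hceq⟩ := exists_third (h3 c hcH) hαc hβc hαβ
      have hwc : w ∈ c := by rw [hceq]; simp
      have hwv : w ≠ v := fun hh => hvnc (hh ▸ hwc)
      by_cases hwS : w ∈ S
      · exact quadL1 hfree hvα hvβ hwv.symm hαβ hwα.symm hwβ.symm
          (hblobH α hαS β hβS hαβ) (hblobH α hαS w hwS hwα.symm)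
          (hblobH β hβS w hwS hwβ.symm) (hceq ▸ hcH)
      · exact (lemA hfree hvS hScard hblobH hαS hβS hαβ hwv hwS) (hceq ▸ hcH)
    · -- z = α
      have hvc : v ∈ c := hmemc v (by rw [hbeq]; simp) (fun e => hvα (e.trans h))
      have hβc : β ∈ c := hmemc β (by rw [hbeq]; simp) (fun e => hαβ (e.trans h).symm)
      obtain ⟨w, hwv, hwβ, hceq⟩ := exists_third (h3 c hcH) hvc hβc hvβ
      have hwc : w ∈ c := by rw [hceq]; simp
      by_cases hwS : w ∈ S
      · exact ⟨β, hβS, w, hwS, hwβ.symm, hceq⟩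
      · exact absurd (hceq ▸ hcC) (fun hcc => hgrow β hβS w hwS hwv hcc)
    · -- z = β
      have hvc : v ∈ c := hmemc v (by rw [hbeq]; simp) (fun e => hvβ (e.trans h))
      have hαc : α ∈ c := hmemc α (by rw [hbeq]; simp) (fun e => hαβ (e.trans h))
      obtain ⟨w, hwv, hwα, hceq⟩ := exists_third (h3 c hcH) hvc hαc hvα
      have hwc : w ∈ c := by rw [hceq]; simp
      by_cases hwS : w ∈ S
      · exact ⟨α, hαS, w, hwS, hwα.symm, hceq⟩
      · exact absurd (hceq ▸ hcC) (fun hcc => hgrow α hαS w hwS hwv hcc)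

include hfree h3 in
lemma exists_common_edge {C : Finset (Finset V)} (hC : IsTightComponent H C) {x y : V}
    (hx : x ∈ C.biUnion id) (hy : y ∈ C.biUnion id) (hxy : x ≠ y) :
    ∃ f ∈ C, x ∈ f ∧ y ∈ f := by
  obtain ⟨ex, hexC, hxex⟩ := mem_biUnion.mp hx
  obtain ⟨ey, heyC, hyey⟩ := mem_biUnion.mp hy
  by_cases hee : ex = ey
  · exact ⟨ex, hexC, hxex, hee ▸ hyey⟩
  · obtain ⟨v, S, hvS, hSc, hblob, hrep⟩ := structure_thm hfree h3 hC hexC heyC hee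
    have hloc : ∀ z, z ∈ C.biUnion id → z = v ∨ z ∈ S := by
      intro z hz
      obtain ⟨e, heC, hze⟩ := mem_biUnion.mp hz
      obtain ⟨a, ha, b, hb, hab, rfl⟩ := hrep e heC
      simp only [id_eq, mem_insert, mem_singleton] at hze
      rcases hze with rfl | rfl | rfl
      · left; rfl
      · right; exact ha
      · right; exact hb
    rcases hloc x hx with rfl | hxS <;> rcases hloc y hy with rfl | hyS
    · exact absurd rfl hxy
    · obtain ⟨s, hsS, hsy⟩ := exists_mem_ne (s := S) (by omega) y
      exact ⟨_, hblob y hyS s hsS hsy.symm, by simp, by simp⟩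
    · obtain ⟨s, hsS, hsx⟩ := exists_mem_ne (s := S) (by omega) x
      exact ⟨_, hblob x hxS s hsS hsx.symm, by simp, by simp⟩
    · exact ⟨_, hblob x hxS y hyS hxy, by simp, by simp⟩

end Structure


theorem stmt_5 {V : Type*} [DecidableEq V] (H : Finset (Finset V))
    (h3 : ∀ e ∈ H, e.card = 3)
    (hfree : ∀ X : Finset V, X.card = 4 → spanCount H X ≠ 2 ∧ spanCount H X ≠ 4)
    (C₁ C₂ : Finset (Finset V))
    (h₁ : IsTightComponent H C₁) (h₂ : IsTightComponent H C₂) (hne : C₁ ≠ C₂) :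
    ((C₁.biUnion id) ∩ (C₂.biUnion id)).card ≤ 1 := by
  by_contra hcard
  rw [not_le] at hcard
  obtain ⟨x, hx, y, hy, hxy⟩ := one_lt_card.mp hcard
  rw [mem_inter] at hx hy
  obtain ⟨f₁, hf₁, hx1, hy1⟩ := exists_common_edge hfree h3 h₁ hx.1 hy.1 hxy
  obtain ⟨f₂, hf₂, hx2, hy2⟩ := exists_common_edge hfree h3 h₂ hx.2 hy.2 hxy
  apply hne
  apply comp_eq_of_two_shared h3 h₁ h₂ hf₁ hf₂
  have hsub : ({x, y} : Finset V) ⊆ f₁ ∩ f₂ := by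
    intro z hz; simp only [mem_insert, mem_singleton] at hz
    rcases hz with rfl | rfl <;> exact mem_inter.mpr ⟨by assumption, by assumption⟩
  calc 2 = ({x, y} : Finset V).card := (card_pair hxy).symm
    _ ≤ _ := card_le_card hsub
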